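/- For real y, z with 0 ≤ y < 1 and 0 ≤ z < 1: ∑_{(j,k): j,k ≥ 1, gcd(j,k)=1} (1/k) · log(1 - y^j z^k) = (y/(1-y)) · log(1 - z). Equivalently, ∏_{gcd(j,k)=1, j,k≥1} (1 - y^j z^k)^{1/k} = (1-z)^{y/(1-y)}. -/

import Mathlib

open Real

/-- HasSum over ℕ+ from ℕ. -/
lemma hasSum_pnat_of_nat {f : ℕ+ → ℝ} {a : ℝ}
    (h : HasSum (fun n : ℕ => f n.succPNat) a) : HasSum f a :=
  (Equiv.pnatEquivNat.symm.hasSum_iff).mp h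

/-- The unfolding bijection `((j,k) coprime, n) ↦ (j*n, k*n)`. -/
lemma phi_bijective :
    Function.Bijective (fun q : {p : ℕ+ × ℕ+ // Nat.gcd (p.1 : ℕ) (p.2 : ℕ) = 1} × ℕ+ =>
      ((q.1.val.1 * q.2, q.1.val.2 * q.2) : ℕ+ × ℕ+)) := by
  constructor
  · rintro ⟨⟨⟨j1, k1⟩, h1⟩, n1⟩ ⟨⟨⟨j2, k2⟩, h2⟩, n2⟩ h
    simp only [Prod.mk.injEq] at h
    obtain ⟨hj, hk⟩ := h
    have hj' : (j1 : ℕ) * n1 = (j2 : ℕ) * n2 := by exact_mod_cast congrArg (fun x : ℕ+ => (x : ℕ)) hj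
    have hk' : (k1 : ℕ) * n1 = (k2 : ℕ) * n2 := by exact_mod_cast congrArg (fun x : ℕ+ => (x : ℕ)) hk
    have hn : (n1 : ℕ) = (n2 : ℕ) := by
      have e1 : Nat.gcd ((j1 : ℕ) * n1) ((k1 : ℕ) * n1) = n1 := by
        rw [Nat.gcd_mul_right, h1, one_mul]
      have e2 : Nat.gcd ((j2 : ℕ) * n2) ((k2 : ℕ) * n2) = n2 := by
        rw [Nat.gcd_mul_right, h2, one_mul]
      rw [← e1, hj', hk', e2]
    have hnn : n1 = n2 := PNat.coe_injective hn
    have hn0 : (n1 : ℕ) ≠ 0 := n1.pos.ne'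
    have hjj : j1 = j2 := PNat.coe_injective (Nat.eq_of_mul_eq_mul_right n1.pos (by rw [hj', hn]))
    have hkk : k1 = k2 := PNat.coe_injective (Nat.eq_of_mul_eq_mul_right n1.pos (by rw [hk', hn]))
    subst hnn hjj hkk
    rfl
  · rintro ⟨J, K⟩
    set g : ℕ := Nat.gcd (J : ℕ) (K : ℕ) with hg
    have hg0 : 0 < g := Nat.gcd_pos_of_pos_left _ J.pos
    have hdJ : g ∣ (J : ℕ) := Nat.gcd_dvd_left _ _
    have hdK : g ∣ (K : ℕ) := Nat.gcd_dvd_right _ _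
    have hj0 : 0 < (J : ℕ) / g := Nat.div_pos (Nat.le_of_dvd J.pos hdJ) hg0
    have hk0 : 0 < (K : ℕ) / g := Nat.div_pos (Nat.le_of_dvd K.pos hdK) hg0
    have hcop : Nat.gcd ((J : ℕ) / g) ((K : ℕ) / g) = 1 :=
      Nat.coprime_div_gcd_div_gcd hg0
    refine ⟨⟨⟨(⟨_, hj0⟩, ⟨_, hk0⟩), hcop⟩, ⟨g, hg0⟩⟩, ?_⟩
    simp only [Prod.mk.injEq]
    constructor
    · exact PNat.eq (Nat.div_mul_cancel hdJ)
    · exact PNat.eq (Nat.div_mul_cancel hdK)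

set_option maxHeartbeats 1000000 in
theorem stmt_5 (y z : ℝ) (hy0 : 0 ≤ y) (hy1 : y < 1) (hz0 : 0 ≤ z) (hz1 : z < 1) :
    (∑' p : {p : ℕ+ × ℕ+ // Nat.gcd (p.1 : ℕ) (p.2 : ℕ) = 1},
        (1 / (p.val.2 : ℝ)) * Real.log (1 - y ^ (p.val.1 : ℕ) * z ^ (p.val.2 : ℕ)) =
      y / (1 - y) * Real.log (1 - z)) ∧
    (∏' p : {p : ℕ+ × ℕ+ // Nat.gcd (p.1 : ℕ) (p.2 : ℕ) = 1},
        (1 - y ^ (p.val.1 : ℕ) * z ^ (p.val.2 : ℕ)) ^ ((1 : ℝ) / (p.val.2 : ℝ)) =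
      (1 - z) ^ (y / (1 - y))) := by
  have hy1' : 0 < 1 - y := by linarith
  have hz1' : 0 < 1 - z := by linarith
  -- geometric series for y over ℕ+
  have hgeo : HasSum (fun J : ℕ+ => y ^ (J : ℕ)) (y / (1 - y)) := by
    apply hasSum_pnat_of_nat
    have := (hasSum_geometric_of_lt_one hy0 hy1).mul_left y
    rw [div_eq_mul_inv]
    convert this using 2 with n
    · rfl
    simp [Nat.succPNat, pow_succ]; ring
  -- log series for z over ℕ+
  have hlog : HasSum (fun K : ℕ+ => -(z ^ (K : ℕ) / (K : ℝ))) (Real.log (1 - z)) := by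
    apply hasSum_pnat_of_nat
    have := (hasSum_pow_div_log_of_abs_lt_one (x := z) (by rwa [abs_of_nonneg hz0])).neg
    rw [neg_neg] at this
    convert this using 2 with n
    · rfl
    have : ((n.succPNat : ℕ+) : ℝ) = (n : ℝ) + 1 := by
      simp [Nat.succPNat]
    rw [this]
    simp [Nat.succPNat]
  -- summability of the double series
  have hsumm : Summable (fun x : ℕ+ × ℕ+ => y ^ (x.1 : ℕ) * (z ^ (x.2 : ℕ) / (x.2 : ℝ))) := by
    refine Summable.mul_of_nonneg (f := fun J : ℕ+ => y ^ (J : ℕ))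
      (g := fun K : ℕ+ => z ^ (K : ℕ) / ((K : ℕ) : ℝ)) hgeo.summable ?_ ?_ ?_
    · have := hlog.summable.neg
      simpa using this
    · intro J; exact pow_nonneg hy0 _
    · intro K; positivity
  -- double series over all pairs
  have hF : HasSum (fun x : ℕ+ × ℕ+ => y ^ (x.1 : ℕ) * -(z ^ (x.2 : ℕ) / ((x.2 : ℕ) : ℝ)))
      (y / (1 - y) * Real.log (1 - z)) := by
    refine hgeo.mul hlog ?_
    simpa [mul_neg] using hsumm.neg
  have hcomp : HasSum (fun q : {p : ℕ+ × ℕ+ // Nat.gcd (p.1 : ℕ) (p.2 : ℕ) = 1} × ℕ+ =>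
      y ^ ((q.1.val.1 * q.2 : ℕ+) : ℕ) *
        -(z ^ ((q.1.val.2 * q.2 : ℕ+) : ℕ) / (((q.1.val.2 * q.2 : ℕ+) : ℕ) : ℝ)))
      (y / (1 - y) * Real.log (1 - z)) :=
    (Equiv.ofBijective _ phi_bijective).hasSum_iff.mpr hF
  have hpos : ∀ p : {p : ℕ+ × ℕ+ // Nat.gcd (p.1 : ℕ) (p.2 : ℕ) = 1},
      y ^ (p.val.1 : ℕ) * z ^ (p.val.2 : ℕ) < 1 := by
    intro p
    calc y ^ (p.val.1 : ℕ) * z ^ (p.val.2 : ℕ) ≤ 1 * z ^ (p.val.2 : ℕ) :=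
          mul_le_mul_of_nonneg_right (pow_le_one₀ hy0 hy1.le) (pow_nonneg hz0 _)
      _ = z ^ (p.val.2 : ℕ) := one_mul _
      _ < 1 := pow_lt_one₀ hz0 hz1 p.val.2.pos.ne'
  have hinner : ∀ p : {p : ℕ+ × ℕ+ // Nat.gcd (p.1 : ℕ) (p.2 : ℕ) = 1},
      HasSum (fun n : ℕ+ =>
        y ^ ((p.val.1 * n : ℕ+) : ℕ) *
          -(z ^ ((p.val.2 * n : ℕ+) : ℕ) / (((p.val.2 * n : ℕ+) : ℕ) : ℝ)))
      ((1 / (p.val.2 : ℝ)) * Real.log (1 - y ^ (p.val.1 : ℕ) * z ^ (p.val.2 : ℕ))) := by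
    intro p
    set t := y ^ (p.val.1 : ℕ) * z ^ (p.val.2 : ℕ) with ht
    have ht0 : 0 ≤ t := mul_nonneg (pow_nonneg hy0 _) (pow_nonneg hz0 _)
    have ht1 : t < 1 := hpos p
    apply hasSum_pnat_of_nat
    have H := (hasSum_pow_div_log_of_abs_lt_one (x := t)
      (by rwa [abs_of_nonneg ht0])).mul_left (-(1 / ((p.val.2 : ℕ) : ℝ)))
    have heq : (-(1 / ((p.val.2 : ℕ) : ℝ))) * (-Real.log (1 - t))
        = (1 / ((p.val.2 : ℕ) : ℝ)) * Real.log (1 - t) := by ring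
    rw [heq] at H
    convert H using 2 with n
    · rfl
    have hk0 : (((p.val.2 : ℕ) : ℕ) : ℝ) ≠ 0 := Nat.cast_ne_zero.mpr p.val.2.pos.ne'
    have hn0 : ((n : ℕ) : ℝ) + 1 ≠ 0 := by positivity
    rw [PNat.mul_coe, PNat.mul_coe, Nat.succPNat_coe, ht, mul_pow, ← pow_mul, ← pow_mul]
    push_cast
    field_simp
  have hS : HasSum (fun p : {p : ℕ+ × ℕ+ // Nat.gcd (p.1 : ℕ) (p.2 : ℕ) = 1} =>
      (1 / (p.val.2 : ℝ)) * Real.log (1 - y ^ (p.val.1 : ℕ) * z ^ (p.val.2 : ℕ)))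
      (y / (1 - y) * Real.log (1 - z)) :=
    HasSum.prod_fiberwise hcomp hinner
  refine ⟨hS.tsum_eq, ?_⟩
  have hppos : ∀ p : {p : ℕ+ × ℕ+ // Nat.gcd (p.1 : ℕ) (p.2 : ℕ) = 1},
      0 < 1 - y ^ (p.val.1 : ℕ) * z ^ (p.val.2 : ℕ) := fun p => by linarith [hpos p]
  have hfun : (rexp ∘ fun p : {p : ℕ+ × ℕ+ // Nat.gcd (p.1 : ℕ) (p.2 : ℕ) = 1} =>
        (1 / (p.val.2 : ℝ)) * Real.log (1 - y ^ (p.val.1 : ℕ) * z ^ (p.val.2 : ℕ)))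
      = fun p => (1 - y ^ (p.val.1 : ℕ) * z ^ (p.val.2 : ℕ)) ^ ((1 : ℝ) / (p.val.2 : ℝ)) := by
    funext p
    simp only [Function.comp_apply]
    rw [Real.rpow_def_of_pos (hppos p), mul_comm]
  have hP := hS.rexp
  rw [hfun] at hP
  have hR : (1 - z) ^ (y / (1 - y)) = rexp (y / (1 - y) * Real.log (1 - z)) := by
    rw [Real.rpow_def_of_pos hz1', mul_comm]
  rw [hR]
  exact hP.tprod_eq
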